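/- Fix the MIBLP data as in the context. Every point of the inducible region IR is feasible to the master problem for any index set: if (x^u, y^u, x^{l0}, y^{l0}) ∈ IR, then for every nonnegative integer vector y ∈ ℤ^{nZ} with (x^u,y^u) ∈ Proj_{(x^u,y^u)} P(y), there exist x ∈ ℝ^{nR}, π ∈ ℝ^{nL}, x ≥ 0, π ≥ 0, satisfying the KKT conditions for the inner LP at (x^u, y^u, y) together with w_R·x^{l0} + w_Z·y^{l0} ≥ w_R·x + w_Z·y. In particular, if IR is nonempty then the master feasible set F(Y') is nonempty for every set Y' of nonnegative integer vectors in ℤ^{nZ}. -/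

import Mathlib

open Matrix

noncomputable section

/-- Coercion of an integer vector into real space. -/
def cRv {n : ℕ} (y : Fin n → ℤ) : Fin n → ℝ := fun i => (y i : ℝ)

variable {mR mZ nR nZ nU nL : ℕ}

/-- The MIBLP constraint region Ω. -/
def OmegaSet (A_R : Matrix (Fin nU) (Fin mR) ℝ) (A_Z : Matrix (Fin nU) (Fin mZ) ℝ)
    (B_R : Matrix (Fin nU) (Fin nR) ℝ) (B_Z : Matrix (Fin nU) (Fin nZ) ℝ)
    (Q_R : Matrix (Fin nL) (Fin mR) ℝ) (Q_Z : Matrix (Fin nL) (Fin mZ) ℝ)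
    (P_R : Matrix (Fin nL) (Fin nR) ℝ) (P_Z : Matrix (Fin nL) (Fin nZ) ℝ)
    (r : Fin nU → ℝ) (s : Fin nL → ℝ) :
    Set ((Fin mR → ℝ) × (Fin mZ → ℤ) × (Fin nR → ℝ) × (Fin nZ → ℤ)) :=
  {p | 0 ≤ p.1 ∧ 0 ≤ p.2.1 ∧ 0 ≤ p.2.2.1 ∧ 0 ≤ p.2.2.2 ∧
    A_R *ᵥ p.1 + A_Z *ᵥ cRv p.2.1 + B_R *ᵥ p.2.2.1 + B_Z *ᵥ cRv p.2.2.2 ≤ r ∧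
    Q_R *ᵥ p.1 + Q_Z *ᵥ cRv p.2.1 + P_R *ᵥ p.2.2.1 + P_Z *ᵥ cRv p.2.2.2 ≤ s}

/-- The lower-level feasible region Ω_{(x^u,y^u)}. -/
def LowerFeas (Q_R : Matrix (Fin nL) (Fin mR) ℝ) (Q_Z : Matrix (Fin nL) (Fin mZ) ℝ)
    (P_R : Matrix (Fin nL) (Fin nR) ℝ) (P_Z : Matrix (Fin nL) (Fin nZ) ℝ)
    (s : Fin nL → ℝ) (xu : Fin mR → ℝ) (yu : Fin mZ → ℤ) :
    Set ((Fin nR → ℝ) × (Fin nZ → ℤ)) :=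
  {q | 0 ≤ q.1 ∧ 0 ≤ q.2 ∧
    P_R *ᵥ q.1 + P_Z *ᵥ cRv q.2 ≤ s - Q_R *ᵥ xu - Q_Z *ᵥ cRv yu}

/-- The inducible region IR. -/
def IRset (A_R : Matrix (Fin nU) (Fin mR) ℝ) (A_Z : Matrix (Fin nU) (Fin mZ) ℝ)
    (B_R : Matrix (Fin nU) (Fin nR) ℝ) (B_Z : Matrix (Fin nU) (Fin nZ) ℝ)
    (Q_R : Matrix (Fin nL) (Fin mR) ℝ) (Q_Z : Matrix (Fin nL) (Fin mZ) ℝ)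
    (P_R : Matrix (Fin nL) (Fin nR) ℝ) (P_Z : Matrix (Fin nL) (Fin nZ) ℝ)
    (w_R : Fin nR → ℝ) (w_Z : Fin nZ → ℝ) (r : Fin nU → ℝ) (s : Fin nL → ℝ) :
    Set ((Fin mR → ℝ) × (Fin mZ → ℤ) × (Fin nR → ℝ) × (Fin nZ → ℤ)) :=
  {p | p ∈ OmegaSet A_R A_Z B_R B_Z Q_R Q_Z P_R P_Z r s ∧
    (p.2.2.1, p.2.2.2) ∈ LowerFeas Q_R Q_Z P_R P_Z s p.1 p.2.1 ∧
    ∀ q ∈ LowerFeas Q_R Q_Z P_R P_Z s p.1 p.2.1,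
      w_R ⬝ᵥ q.1 + w_Z ⬝ᵥ cRv q.2 ≤ w_R ⬝ᵥ p.2.2.1 + w_Z ⬝ᵥ cRv p.2.2.2}

/-- Membership of (x^u,y^u) in Proj_{(x^u,y^u)} P(y). -/
def ProjMem (Q_R : Matrix (Fin nL) (Fin mR) ℝ) (Q_Z : Matrix (Fin nL) (Fin mZ) ℝ)
    (P_R : Matrix (Fin nL) (Fin nR) ℝ) (P_Z : Matrix (Fin nL) (Fin nZ) ℝ)
    (s : Fin nL → ℝ) (xu : Fin mR → ℝ) (yu : Fin mZ → ℤ) (y : Fin nZ → ℤ) : Prop :=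
  0 ≤ xu ∧ 0 ≤ yu ∧ 0 ≤ y ∧
    ∃ x : Fin nR → ℝ, 0 ≤ x ∧
      Q_R *ᵥ xu + Q_Z *ᵥ cRv yu + P_R *ᵥ x ≤ s - P_Z *ᵥ cRv y

/-- KKT conditions for the inner LP max{w_R·x : P_R x ≤ b, x ≥ 0},
where b = s − Q_R x^u − Q_Z y^u − P_Z y. -/
def KKTcond (Q_R : Matrix (Fin nL) (Fin mR) ℝ) (Q_Z : Matrix (Fin nL) (Fin mZ) ℝ)
    (P_R : Matrix (Fin nL) (Fin nR) ℝ) (P_Z : Matrix (Fin nL) (Fin nZ) ℝ)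
    (w_R : Fin nR → ℝ) (s : Fin nL → ℝ)
    (xu : Fin mR → ℝ) (yu : Fin mZ → ℤ) (y : Fin nZ → ℤ)
    (x : Fin nR → ℝ) (π : Fin nL → ℝ) : Prop :=
  0 ≤ x ∧ 0 ≤ π ∧
  P_R *ᵥ x ≤ s - Q_R *ᵥ xu - Q_Z *ᵥ cRv yu - P_Z *ᵥ cRv y ∧
  w_R ≤ P_Rᵀ *ᵥ π ∧
  (∀ i, x i * ((P_Rᵀ *ᵥ π) i - w_R i) = 0) ∧
  (∀ k, π k * ((s - Q_R *ᵥ xu - Q_Z *ᵥ cRv yu - P_Z *ᵥ cRv y) k - (P_R *ᵥ x) k) = 0)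

/-- The master feasible set F(Y): tuples in Ω satisfying the guarded KKT
constraint for every lower-level integer vector in Y. -/
def MasterFeas (A_R : Matrix (Fin nU) (Fin mR) ℝ) (A_Z : Matrix (Fin nU) (Fin mZ) ℝ)
    (B_R : Matrix (Fin nU) (Fin nR) ℝ) (B_Z : Matrix (Fin nU) (Fin nZ) ℝ)
    (Q_R : Matrix (Fin nL) (Fin mR) ℝ) (Q_Z : Matrix (Fin nL) (Fin mZ) ℝ)
    (P_R : Matrix (Fin nL) (Fin nR) ℝ) (P_Z : Matrix (Fin nL) (Fin nZ) ℝ)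
    (w_R : Fin nR → ℝ) (w_Z : Fin nZ → ℝ) (r : Fin nU → ℝ) (s : Fin nL → ℝ)
    (Y : Set (Fin nZ → ℤ)) :
    Set ((Fin mR → ℝ) × (Fin mZ → ℤ) × (Fin nR → ℝ) × (Fin nZ → ℤ)) :=
  {p | p ∈ OmegaSet A_R A_Z B_R B_Z Q_R Q_Z P_R P_Z r s ∧
    ∀ y ∈ Y, ProjMem Q_R Q_Z P_R P_Z s p.1 p.2.1 y →
      ∃ (x : Fin nR → ℝ) (π : Fin nL → ℝ),
        KKTcond Q_R Q_Z P_R P_Z w_R s p.1 p.2.1 y x π ∧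
        w_R ⬝ᵥ x + w_Z ⬝ᵥ cRv y ≤ w_R ⬝ᵥ p.2.2.1 + w_Z ⬝ᵥ cRv p.2.2.2}


section AuxLP
open scoped RealInnerProductSpace

set_option linter.unusedSectionVars false

variable {κ : Type*} [Fintype κ] {ι : Type*} [Fintype ι] [DecidableEq ι]

abbrev Evec (κ : Type*) : Type _ := EuclideanSpace ℝ κ

def toE (x : κ → ℝ) : Evec κ := WithLp.toLp 2 x

/-- Evaluation at a coordinate as an additive monoid hom. -/
def evalHom (j : κ) : Evec κ →+ ℝ where
  toFun := fun x => x j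
  map_zero' := rfl
  map_add' := fun _ _ => rfl

lemma Evec.sum_apply {ι : Type*} [Fintype ι] (f : ι → Evec κ) (j : κ) :
    (∑ i, f i) j = ∑ i, f i j :=
  map_sum (evalHom j) f Finset.univ

def coneOf (v : ι → Evec κ) : Set (Evec κ) :=
  {x | ∃ c : ι → ℝ, (∀ i, 0 ≤ c i) ∧ x = ∑ i, c i • v i}

lemma inner_eq_dot (x y : Evec κ) : ⟪x, y⟫ = (fun i => x i) ⬝ᵥ (fun i => y i) := by
  simp [PiLp.inner_apply, dotProduct, RCLike.inner_apply, mul_comm]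

lemma isClosed_subcone (v : ι → Evec κ) (S : Finset ι)
    (hS : LinearIndependent ℝ (fun i : {i // i ∈ S} => v i)) :
    IsClosed {x : Evec κ | ∃ c : {i // i ∈ S} → ℝ, (∀ i, 0 ≤ c i) ∧ x = ∑ i, c i • v i} := by
  set f : ({i // i ∈ S} → ℝ) →ₗ[ℝ] Evec κ := Fintype.linearCombination ℝ (fun i : {i // i ∈ S} => v i)
  have hker : LinearMap.ker f = ⊥ := by
    rw [LinearMap.ker_eq_bot']
    intro g hg
    rw [Fintype.linearIndependent_iff] at hS
    funext i
    exact hS g (by simpa [f, Fintype.linearCombination_apply] using hg) i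
  have hemb := LinearMap.isClosedEmbedding_of_injective (f := f) hker
  have hset : {x : Evec κ | ∃ c : {i // i ∈ S} → ℝ, (∀ i, 0 ≤ c i) ∧ x = ∑ i, c i • v i}
      = f '' {c | ∀ i, 0 ≤ c i} := by
    ext x
    simp only [Set.mem_setOf_eq, Set.mem_image]
    constructor
    · rintro ⟨c, hc, rfl⟩; exact ⟨c, hc, by simp [f, Fintype.linearCombination_apply]⟩
    · rintro ⟨c, hc, rfl⟩; exact ⟨c, hc, by simp [f, Fintype.linearCombination_apply]⟩
  rw [hset]
  refine hemb.isClosedMap _ ?_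
  have h2 : {c : {i // i ∈ S} → ℝ | ∀ i, 0 ≤ c i} = ⋂ i, {c | 0 ≤ c i} := by
    ext c; simp [Set.mem_iInter]
  rw [h2]
  exact isClosed_iInter fun i => isClosed_le continuous_const (continuous_apply i)

lemma cone_caratheodory (v : ι → Evec κ) :
    ∀ n (c : ι → ℝ), (Finset.univ.filter (fun i => c i ≠ 0)).card = n → (∀ i, 0 ≤ c i) →
    ∃ c' : ι → ℝ, (∀ i, 0 ≤ c' i) ∧ (∑ i, c' i • v i = ∑ i, c i • v i) ∧
      LinearIndependent ℝ (fun i : {i // i ∈ Finset.univ.filter (fun j => c' j ≠ 0)} => v i) := by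
  intro n
  induction n using Nat.strong_induction_on with
  | _ n ih =>
    intro c hcard hc
    by_cases hli : LinearIndependent ℝ (fun i : {i // i ∈ Finset.univ.filter (fun j => c j ≠ 0)} => v i)
    · exact ⟨c, hc, rfl, hli⟩
    · -- get a nontrivial relation supported on the support of c
      set S := Finset.univ.filter (fun j => c j ≠ 0) with hSdef
      rw [Fintype.not_linearIndependent_iff] at hli
      obtain ⟨g, hgsum, ⟨i₁, hi₁⟩⟩ := hli
      have hext : ∃ e : ι → ℝ, (∀ i, i ∉ S → e i = 0) ∧ (∑ i, e i • v i = 0) ∧ ∃ i, 0 < e i := by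
        set e0 : ι → ℝ := fun i => if h : i ∈ S then g ⟨i, h⟩ else 0 with he0
        have he0S : ∀ i, i ∉ S → e0 i = 0 := fun i hi => by simp [he0, hi]
        have hsum0 : ∑ i, e0 i • v i = 0 := by
          have h1 : ∑ i ∈ S, e0 i • v i = ∑ i, e0 i • v i :=
            Finset.sum_subset (Finset.subset_univ S) (fun i _ hi => by simp [he0S i hi])
          have h2 : ∑ i ∈ S, e0 i • v i = ∑ i : {i // i ∈ S}, e0 i • v i :=
            (Finset.sum_coe_sort S (fun i => e0 i • v i)).symm
          have h3 : ∑ i : {i // i ∈ S}, e0 i • v i = ∑ i : {i // i ∈ S}, g i • v i := by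
            refine Finset.sum_congr rfl (fun i _ => ?_)
            simp [he0, i.2]
          rw [← h1, h2, h3, hgsum]
        have he0i₁ : e0 ↑i₁ ≠ 0 := by
          have : e0 ↑i₁ = g i₁ := by simp [he0, i₁.2]
          rw [this]; exact hi₁
        rcases lt_or_gt_of_ne he0i₁ with h | h
        · refine ⟨-e0, fun i hi => by simp [he0S i hi], ?_, ⟨i₁, by simpa using h⟩⟩
          simp only [Pi.neg_apply, neg_smul, Finset.sum_neg_distrib, hsum0, neg_zero]
        · exact ⟨e0, he0S, hsum0, ⟨i₁, h⟩⟩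
      obtain ⟨e, heS, hesum, ⟨i₂, hi₂⟩⟩ := hext
      -- take the min ratio
      have hne : (S.filter (fun i => 0 < e i)).Nonempty := by
        refine ⟨i₂, Finset.mem_filter.2 ⟨?_, hi₂⟩⟩
        by_contra h
        rw [heS i₂ h] at hi₂; exact lt_irrefl 0 hi₂
      obtain ⟨i₀, hi₀mem, hi₀min⟩ := Finset.exists_min_image _ (fun i => c i / e i) hne
      rw [Finset.mem_filter] at hi₀mem
      set t := c i₀ / e i₀ with ht
      have hei₀ : 0 < e i₀ := hi₀mem.2
      have htnn : 0 ≤ t := div_nonneg (hc i₀) hei₀.le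
      set c' : ι → ℝ := fun i => c i - t * e i with hc'
      have hc'nn : ∀ i, 0 ≤ c' i := by
        intro i
        rcases le_or_gt (e i) 0 with h | h
        · have : t * e i ≤ 0 := mul_nonpos_of_nonneg_of_nonpos htnn h
          simp only [hc']; linarith [hc i]
        · have hiS : i ∈ S := by
            by_contra hns; rw [heS i hns] at h; exact lt_irrefl 0 h
          have := hi₀min i (Finset.mem_filter.2 ⟨hiS, h⟩)
          have : t * e i ≤ c i := by
            rw [le_div_iff₀ h] at this
            exact this
          simp only [hc']; linarith
      have hc'sum : ∑ i, c' i • v i = ∑ i, c i • v i := by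
        simp only [hc', sub_smul, Finset.sum_sub_distrib, ← smul_smul]
        rw [← Finset.smul_sum, hesum, smul_zero, sub_zero]
      have hc'i₀ : c' i₀ = 0 := by
        simp only [hc', ht]; field_simp; ring
      have hsubset : Finset.univ.filter (fun j => c' j ≠ 0) ⊂ S := by
        constructor
        · intro i hi
          rw [Finset.mem_filter] at hi ⊢
          refine ⟨Finset.mem_univ i, ?_⟩
          intro hci
          apply hi.2
          have hei : e i = 0 := heS i (by simp [hSdef, hci])
          simp [hc', hci, hei]
        · intro hsup
          have := hsup (hi₀mem.1)
          rw [Finset.mem_filter] at this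
          exact this.2 hc'i₀
      have hcard' : (Finset.univ.filter (fun j => c' j ≠ 0)).card < n := by
        rw [← hcard]; exact Finset.card_lt_card hsubset
      obtain ⟨c'', h1, h2, h3⟩ := ih _ hcard' c' rfl hc'nn
      exact ⟨c'', h1, h2.trans hc'sum, h3⟩

lemma sum_restrict (c : ι → ℝ) (w : ι → Evec κ) (S : Finset ι) (h0 : ∀ i ∉ S, c i = 0) :
    ∑ i : {i // i ∈ S}, c i • w i = ∑ i : ι, c i • w i := by
  rw [Finset.sum_coe_sort S (fun i => c i • w i)]
  exact Finset.sum_subset (Finset.subset_univ S) (fun i _ hi => by simp [h0 i hi])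

lemma isClosed_coneOf (v : ι → Evec κ) : IsClosed (coneOf v) := by
  have : coneOf v = ⋃ S ∈ {S : Finset ι | LinearIndependent ℝ (fun i : {i // i ∈ S} => v i)},
      {x : Evec κ | ∃ c : {i // i ∈ S} → ℝ, (∀ i, 0 ≤ c i) ∧ x = ∑ i, c i • v i} := by
    ext x
    simp only [Set.mem_iUnion, Set.mem_setOf_eq, coneOf]
    constructor
    · rintro ⟨c, hc, rfl⟩
      obtain ⟨c', hc', hsum, hli⟩ :=
        cone_caratheodory v (Finset.univ.filter (fun i => c i ≠ 0)).card c rfl (fun i => hc i)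
      refine ⟨Finset.univ.filter (fun j => c' j ≠ 0), hli, fun i => c' i, fun i => hc' i, ?_⟩
      rw [← hsum]
      exact (sum_restrict c' v _ (fun i hi => by
        simpa using (by simpa using hi : ¬ c' i ≠ 0))).symm
    · rintro ⟨S, hS, c, hc, rfl⟩
      classical
      refine ⟨fun i => if h : i ∈ S then c ⟨i, h⟩ else 0, fun i => by
        by_cases h : i ∈ S <;> simp [h, hc], ?_⟩
      rw [← sum_restrict (fun i => if h : i ∈ S then c ⟨i, h⟩ else 0) v S
        (fun i hi => by simp [hi])]
      exact Finset.sum_congr rfl (fun i _ => by simp [i.2])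
  rw [this]
  exact Set.Finite.isClosed_biUnion (Set.toFinite _) (fun S hS => isClosed_subcone v S hS)

/-- The cone of nonnegative combinations as a `ConvexCone`. -/
def coneCone (v : ι → Evec κ) : ConvexCone ℝ (Evec κ) where
  carrier := coneOf v
  smul_mem' := by
    rintro a ha x ⟨c, hc, rfl⟩
    exact ⟨fun i => a * c i, fun i => mul_nonneg ha.le (hc i), by
      rw [Finset.smul_sum]; exact Finset.sum_congr rfl fun i _ => by simp [smul_smul]⟩
  add_mem' := by
    rintro x ⟨c, hc, rfl⟩ y ⟨c', hc', rfl⟩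
    exact ⟨fun i => c i + c' i, fun i => add_nonneg (hc i) (hc' i), by
      rw [← Finset.sum_add_distrib]; exact Finset.sum_congr rfl fun i _ => (add_smul _ _ _).symm⟩

lemma farkas_sep (v : ι → Evec κ) (b : Evec κ) (hb : b ∉ coneOf v) :
    ∃ y : Evec κ, (∀ i, ⟪v i, y⟫ ≤ 0) ∧ 0 < ⟪b, y⟫ := by
  have hne : ((coneCone v : ConvexCone ℝ (Evec κ)) : Set (Evec κ)).Nonempty :=
    ⟨0, ⟨fun _ => 0, fun i => le_refl 0, by simp⟩⟩
  obtain ⟨y, hy1, hy2⟩ : ∃ y, (∀ x ∈ coneCone v, 0 ≤ ⟪x, y⟫) ∧ ⟪y, b⟫ < 0 := by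
    let C : ProperCone ℝ (Evec κ) :=
      { toSubmodule := (coneCone v).toPointedCone ⟨fun _ => 0, fun i => le_refl 0, by simp⟩
        isClosed' := isClosed_coneOf v }
    obtain ⟨y, hy1, hy2⟩ := ProperCone.hyperplane_separation' C (x₀ := b) (by exact hb)
    exact ⟨y, fun x hx => hy1 x hx, by rwa [real_inner_comm]⟩
  refine ⟨-y, fun i => ?_, ?_⟩
  · have hvi : v i ∈ coneCone v := ⟨Pi.single i 1, fun j => by
      by_cases h : j = i <;> simp [Pi.single_apply, h], by
      rw [Finset.sum_eq_single i (fun j _ hj => by simp [Pi.single_apply, hj]) (by simp)]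
      simp⟩
    have := hy1 _ hvi
    rw [inner_neg_right]; linarith
  · rw [inner_neg_right, real_inner_comm]; linarith

lemma farkas_matrix {k n : Type*} [Fintype k] [Fintype n] [DecidableEq k] [DecidableEq n]
    (A : Matrix k n ℝ) (b : k → ℝ)
    (h : ¬ ∃ x : n → ℝ, (∀ j, 0 ≤ x j) ∧ A *ᵥ x ≤ b) :
    ∃ u : k → ℝ, (∀ i, 0 ≤ u i) ∧ (∀ j, 0 ≤ (Aᵀ *ᵥ u) j) ∧ b ⬝ᵥ u < 0 := by
  classical
  set v : (n ⊕ k) → Evec k :=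
    Sum.elim (fun j => toE (fun i => A i j)) (fun l => toE (Pi.single l 1)) with hv
  have hbmem : toE b ∉ coneOf v := by
    intro ⟨c, hc, hbc⟩
    apply h
    refine ⟨fun j => c (Sum.inl j), fun j => hc _, ?_⟩
    intro i
    have hbi : b i = (A *ᵥ (fun j => c (Sum.inl j))) i + c (Sum.inr i) := by
      have h1 : toE b i = (∑ p : n ⊕ k, c p • v p) i := congrArg (fun z : Evec k => z i) hbc
      rw [Evec.sum_apply] at h1
      rw [show b i = toE b i from rfl, h1, Fintype.sum_sum_type]
      have h2 : ∀ j : n, (c (Sum.inl j) • v (Sum.inl j)) i = A i j * c (Sum.inl j) := by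
        intro j; simp [hv, toE, mul_comm]
      have h3 : ∀ l : k, (c (Sum.inr l) • v (Sum.inr l)) i
          = c (Sum.inr l) * (Pi.single l (1:ℝ) : k → ℝ) i := by
        intro l; simp [hv, toE, Pi.single_apply, eq_comm]
      simp only [h2, h3]
      rw [Finset.sum_eq_single i (fun l _ hl => by simp [Pi.single_apply, hl]) (by simp)]
      simp [mulVec, dotProduct]
    have : 0 ≤ c (Sum.inr i) := hc _
    linarith [le_of_eq hbi.symm]
  obtain ⟨y, hy1, hy2⟩ := farkas_sep v (toE b) hbmem
  refine ⟨fun i => -(y i), ?_, ?_, ?_⟩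
  · intro i
    show (0:ℝ) ≤ -(y i)
    have := hy1 (Sum.inr i)
    rw [inner_eq_dot] at this
    simp only [hv, Sum.elim_inr, toE] at this
    rw [show (fun j => Pi.single i (1:ℝ) j) ⬝ᵥ (fun j => y j) = y i by
      simp [dotProduct, Pi.single_apply]] at this
    linarith
  · intro j
    have := hy1 (Sum.inl j)
    rw [inner_eq_dot] at this
    simp only [hv, Sum.elim_inl, toE] at this
    have h2 : (fun i => A i j) ⬝ᵥ (fun i => y i) = ∑ i, A i j * y i := rfl
    rw [h2] at this
    have h3 : (Aᵀ *ᵥ (fun i => -(y i))) j = -∑ i, A i j * y i := by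
      simp [mulVec, dotProduct, transpose]
    rw [h3]
    linarith
  · rw [inner_eq_dot] at hy2
    have h4 : b ⬝ᵥ (fun i => -(y i)) = -((fun i => toE b i) ⬝ᵥ (fun i => y i)) := by
      simp [toE, dotProduct]
    rw [h4]
    linarith

lemma dot_mono {n : Type*} [Fintype n] {u v w : n → ℝ} (hu : 0 ≤ u) (h : v ≤ w) :
    u ⬝ᵥ v ≤ u ⬝ᵥ w :=
  Finset.sum_le_sum fun i _ => mul_le_mul_of_nonneg_left (h i) (hu i)

lemma transpose_dot {k n : Type*} [Fintype k] [Fintype n] (A : Matrix k n ℝ)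
    (π : k → ℝ) (x : n → ℝ) : (Aᵀ *ᵥ π) ⬝ᵥ x = π ⬝ᵥ (A *ᵥ x) := by
  rw [dotProduct_mulVec, Matrix.mulVec_transpose]

lemma weak_duality {k n : Type*} [Fintype k] [Fintype n] (A : Matrix k n ℝ)
    (b : k → ℝ) (w : n → ℝ) (x : n → ℝ) (π : k → ℝ)
    (hx : 0 ≤ x) (hπ : 0 ≤ π) (hAx : A *ᵥ x ≤ b) (hAtπ : w ≤ Aᵀ *ᵥ π) :
    w ⬝ᵥ x ≤ b ⬝ᵥ π := by
  calc w ⬝ᵥ x ≤ (Aᵀ *ᵥ π) ⬝ᵥ x := by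
        rw [dotProduct_comm w x, dotProduct_comm (Aᵀ *ᵥ π) x]
        exact dot_mono hx hAtπ
    _ = π ⬝ᵥ (A *ᵥ x) := transpose_dot A π x
    _ ≤ π ⬝ᵥ b := dot_mono hπ hAx
    _ = b ⬝ᵥ π := dotProduct_comm π b

lemma dual_feasible {nl nr : ℕ} (A : Matrix (Fin nl) (Fin nr) ℝ) (b : Fin nl → ℝ)
    (w : Fin nr → ℝ) (x₀ : Fin nr → ℝ) (hx₀ : 0 ≤ x₀) (hfeas : A *ᵥ x₀ ≤ b)
    (C : ℝ) (hbound : ∀ x : Fin nr → ℝ, 0 ≤ x → A *ᵥ x ≤ b → w ⬝ᵥ x ≤ C) :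
    ∃ π : Fin nl → ℝ, 0 ≤ π ∧ w ≤ Aᵀ *ᵥ π := by
  by_contra hno
  have h : ¬ ∃ π : Fin nl → ℝ, (∀ i, 0 ≤ π i) ∧ (-Aᵀ) *ᵥ π ≤ -w := by
    rintro ⟨π, h1, h2⟩
    exact hno ⟨π, fun i => h1 i, fun j => by
      have := h2 j
      simp only [Matrix.neg_mulVec, Pi.neg_apply] at this
      linarith⟩
  obtain ⟨u, hu1, hu2, hu3⟩ := farkas_matrix (-Aᵀ) (-w) h
  -- u ≥ 0, A u ≤ 0, w ⬝ u > 0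
  have hAu : ∀ i, (A *ᵥ u) i ≤ 0 := by
    intro i
    have := hu2 i
    rw [Matrix.transpose_neg, Matrix.transpose_transpose, Matrix.neg_mulVec] at this
    simpa using this
  have hwu : 0 < w ⬝ᵥ u := by
    have : (-w) ⬝ᵥ u = -(w ⬝ᵥ u) := by simp [dotProduct, Finset.sum_neg_distrib]
    rw [this] at hu3; linarith
  set t : ℝ := max 0 ((C - w ⬝ᵥ x₀) / (w ⬝ᵥ u) + 1) with htdef
  have ht0 : 0 ≤ t := le_max_left _ _
  have hbig : (C - w ⬝ᵥ x₀) / (w ⬝ᵥ u) < t :=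
    lt_of_lt_of_le (lt_add_one _) (le_max_right _ _)
  have hts : C - w ⬝ᵥ x₀ < t * (w ⬝ᵥ u) := by
    rw [div_lt_iff₀ hwu] at hbig; linarith
  have hfeas' : A *ᵥ (x₀ + t • u) ≤ b := by
    intro i
    rw [Matrix.mulVec_add, Matrix.mulVec_smul]
    have := hAu i
    have hb := hfeas i
    simp only [Pi.add_apply, Pi.smul_apply, smul_eq_mul]
    nlinarith
  have hnn : 0 ≤ x₀ + t • u := by
    intro j
    have := hu1 j
    have := hx₀ j
    simp only [Pi.add_apply, Pi.smul_apply, smul_eq_mul]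
    nlinarith
  have := hbound _ hnn hfeas'
  rw [dotProduct_add, dotProduct_smul] at this
  simp only [smul_eq_mul] at this
  linarith

lemma strong_duality {nl nr : ℕ} (A : Matrix (Fin nl) (Fin nr) ℝ) (b : Fin nl → ℝ)
    (w : Fin nr → ℝ) (x₀ : Fin nr → ℝ) (hx₀ : 0 ≤ x₀) (hfeas : A *ᵥ x₀ ≤ b)
    (π₀ : Fin nl → ℝ) (hπ₀ : 0 ≤ π₀) (hdual : w ≤ Aᵀ *ᵥ π₀) :
    ∃ (x : Fin nr → ℝ) (π : Fin nl → ℝ), 0 ≤ x ∧ 0 ≤ π ∧ A *ᵥ x ≤ b ∧ w ≤ Aᵀ *ᵥ π ∧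
      b ⬝ᵥ π ≤ w ⬝ᵥ x := by
  classical
  set M : Matrix (Fin nl ⊕ (Fin nr ⊕ Unit)) (Fin nr ⊕ Fin nl) ℝ :=
    Matrix.of fun ri ci =>
      match ri, ci with
      | .inl i, .inl j => A i j
      | .inl _, .inr _ => 0
      | .inr (.inl _), .inl _ => 0
      | .inr (.inl j'), .inr l => -A l j'
      | .inr (.inr _), .inl j => -w j
      | .inr (.inr _), .inr l => b l
    with hM
  set q : (Fin nl ⊕ (Fin nr ⊕ Unit)) → ℝ :=
    Sum.elim b (Sum.elim (fun j => -w j) (fun _ => 0)) with hq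
  have key : ∃ z : (Fin nr ⊕ Fin nl) → ℝ, (∀ j, 0 ≤ z j) ∧ M *ᵥ z ≤ q := by
    by_contra hno
    obtain ⟨u, hu1, hu2, hu3⟩ := farkas_matrix M q hno
    set lam : Fin nl → ℝ := fun i => u (Sum.inl i) with hlam
    set mu : Fin nr → ℝ := fun j => u (Sum.inr (Sum.inl j)) with hmu
    set t : ℝ := u (Sum.inr (Sum.inr ())) with htdef
    have ht0 : 0 ≤ t := hu1 _
    have hcol1 : ∀ j, t * w j ≤ (Aᵀ *ᵥ lam) j := by
      intro j
      have := hu2 (Sum.inl j)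
      rw [Matrix.mulVec, dotProduct] at this
      rw [Fintype.sum_sum_type] at this
      simp only [Matrix.transpose_apply, Fintype.sum_sum_type, Finset.univ_unique,
        Finset.sum_singleton] at this
      simp only [hM, Matrix.of_apply] at this
      have heq : ∑ i, A i j * u (Sum.inl i) = (Aᵀ *ᵥ lam) j := by
        simp [Matrix.mulVec, dotProduct, Matrix.transpose_apply, hlam]
      simp only [zero_mul, Finset.sum_const_zero, add_zero, zero_add] at this
      rw [heq] at this
      have : 0 ≤ (Aᵀ *ᵥ lam) j + -w j * t := this
      linarith [this]
    have hcol2 : ∀ l, (A *ᵥ mu) l ≤ t * b l := by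
      intro l
      have := hu2 (Sum.inr l)
      rw [Matrix.mulVec, dotProduct] at this
      rw [Fintype.sum_sum_type] at this
      simp only [Matrix.transpose_apply, Fintype.sum_sum_type, Finset.univ_unique,
        Finset.sum_singleton] at this
      simp only [hM, Matrix.of_apply] at this
      have heq : ∑ j, -A l j * u (Sum.inr (Sum.inl j)) = -(A *ᵥ mu) l := by
        simp [Matrix.mulVec, dotProduct, hmu, Finset.sum_neg_distrib]
      simp only [zero_mul, Finset.sum_const_zero, zero_add, add_zero] at this
      rw [heq] at this
      have : 0 ≤ -(A *ᵥ mu) l + b l * t := this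
      linarith [this]
    have hobj : b ⬝ᵥ lam < w ⬝ᵥ mu := by
      rw [dotProduct, Fintype.sum_sum_type] at hu3
      simp only [Fintype.sum_sum_type, Finset.univ_unique, Finset.sum_singleton] at hu3
      simp only [hq, Sum.elim_inl, Sum.elim_inr, zero_mul, add_zero] at hu3
      have h1 : ∑ i, b i * u (Sum.inl i) = b ⬝ᵥ lam := rfl
      have h2 : ∑ j, -w j * u (Sum.inr (Sum.inl j)) = -(w ⬝ᵥ mu) := by
        simp [dotProduct, hmu, Finset.sum_neg_distrib]
      rw [h1, h2] at hu3
      linarith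
    rcases eq_or_lt_of_le ht0 with hteq | htpos
    · -- t = 0 case
      have hAtlam : ∀ j, 0 ≤ (Aᵀ *ᵥ lam) j := fun j => by
        have := hcol1 j; rw [← hteq] at this; simpa using this
      have hAmu : ∀ l, (A *ᵥ mu) l ≤ 0 := fun l => by
        have := hcol2 l; rw [← hteq] at this; simpa using this
      have h1 : 0 ≤ b ⬝ᵥ lam := by
        have hlam0 : 0 ≤ lam := fun i => hu1 _
        calc (0:ℝ) ≤ (Aᵀ *ᵥ lam) ⬝ᵥ x₀ := by
              rw [dotProduct]
              exact Finset.sum_nonneg fun j _ => mul_nonneg (hAtlam j) (hx₀ j)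
          _ = lam ⬝ᵥ (A *ᵥ x₀) := transpose_dot A lam x₀
          _ ≤ lam ⬝ᵥ b := dot_mono hlam0 hfeas
          _ = b ⬝ᵥ lam := dotProduct_comm _ _
      have h2 : w ⬝ᵥ mu ≤ 0 := by
        have hmu0 : 0 ≤ mu := fun j => hu1 _
        calc w ⬝ᵥ mu ≤ (Aᵀ *ᵥ π₀) ⬝ᵥ mu := by
              rw [dotProduct_comm w mu, dotProduct_comm (Aᵀ *ᵥ π₀) mu]
              exact dot_mono hmu0 hdual
          _ = π₀ ⬝ᵥ (A *ᵥ mu) := transpose_dot A π₀ mu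
          _ ≤ π₀ ⬝ᵥ 0 := dot_mono hπ₀ (fun l => hAmu l)
          _ = 0 := dotProduct_zero π₀
      linarith
    · -- t > 0 case
      set x' : Fin nr → ℝ := t⁻¹ • mu with hx'
      set π' : Fin nl → ℝ := t⁻¹ • lam with hπ'
      have hx'0 : 0 ≤ x' := fun j =>
        mul_nonneg (inv_nonneg.2 ht0) (hu1 _)
      have hπ'0 : 0 ≤ π' := fun i =>
        mul_nonneg (inv_nonneg.2 ht0) (hu1 _)
      have hx'feas : A *ᵥ x' ≤ b := by
        intro l
        rw [hx', Matrix.mulVec_smul]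
        have := hcol2 l
        simp only [Pi.smul_apply, smul_eq_mul]
        rw [inv_mul_le_iff₀ htpos]
        linarith [this]
      have hπ'feas : w ≤ Aᵀ *ᵥ π' := by
        intro j
        rw [hπ', Matrix.mulVec_smul]
        have := hcol1 j
        simp only [Pi.smul_apply, smul_eq_mul]
        rw [le_inv_mul_iff₀ htpos]
        linarith [this]
      have hweak := weak_duality A b w x' π' hx'0 hπ'0 hx'feas hπ'feas
      have hstrict : b ⬝ᵥ π' < w ⬝ᵥ x' := by
        rw [hx', hπ', dotProduct_smul, dotProduct_smul]
        simp only [smul_eq_mul]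
        have hinv : 0 < t⁻¹ := inv_pos.2 htpos
        exact mul_lt_mul_of_pos_left hobj hinv
      linarith
  obtain ⟨z, hz0, hzle⟩ := key
  set x : Fin nr → ℝ := fun j => z (Sum.inl j) with hx
  set π : Fin nl → ℝ := fun l => z (Sum.inr l) with hπ
  have hrow : ∀ ri, (M *ᵥ z) ri ≤ q ri := hzle
  have hAx : A *ᵥ x ≤ b := by
    intro i
    have := hrow (Sum.inl i)
    rw [Matrix.mulVec, dotProduct, Fintype.sum_sum_type] at this
    simp only [hM, Matrix.of_apply, zero_mul, Finset.sum_const_zero, add_zero,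
      hq, Sum.elim_inl] at this
    exact this
  have hAtπ : w ≤ Aᵀ *ᵥ π := by
    intro j
    have := hrow (Sum.inr (Sum.inl j))
    rw [Matrix.mulVec, dotProduct, Fintype.sum_sum_type] at this
    simp only [hM, Matrix.of_apply, zero_mul, Finset.sum_const_zero, zero_add,
      hq, Sum.elim_inl, Sum.elim_inr] at this
    have heq : ∑ l, -A l j * z (Sum.inr l) = -(Aᵀ *ᵥ π) j := by
      simp [Matrix.mulVec, dotProduct, Matrix.transpose_apply, hπ,
        Finset.sum_neg_distrib]
    rw [heq] at this
    linarith
  have hobj : b ⬝ᵥ π ≤ w ⬝ᵥ x := by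
    have := hrow (Sum.inr (Sum.inr ()))
    rw [Matrix.mulVec, dotProduct, Fintype.sum_sum_type] at this
    simp only [hM, Matrix.of_apply, hq, Sum.elim_inr] at this
    have h1 : ∑ j, -w j * z (Sum.inl j) = -(w ⬝ᵥ x) := by
      simp [dotProduct, hx, Finset.sum_neg_distrib]
    have h2 : ∑ l, b l * z (Sum.inr l) = b ⬝ᵥ π := rfl
    rw [h1, h2] at this
    linarith
  exact ⟨x, π, fun j => hz0 _, fun l => hz0 _, hAx, hAtπ, hobj⟩

lemma exists_kkt {nl nr : ℕ} (A : Matrix (Fin nl) (Fin nr) ℝ) (b : Fin nl → ℝ)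
    (w : Fin nr → ℝ) (x₀ : Fin nr → ℝ) (hx₀ : 0 ≤ x₀) (hfeas : A *ᵥ x₀ ≤ b)
    (C : ℝ) (hbound : ∀ x : Fin nr → ℝ, 0 ≤ x → A *ᵥ x ≤ b → w ⬝ᵥ x ≤ C) :
    ∃ (x : Fin nr → ℝ) (π : Fin nl → ℝ), 0 ≤ x ∧ 0 ≤ π ∧ A *ᵥ x ≤ b ∧ w ≤ Aᵀ *ᵥ π ∧
      (∀ i, x i * ((Aᵀ *ᵥ π) i - w i) = 0) ∧
      (∀ k, π k * (b k - (A *ᵥ x) k) = 0) := by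
  obtain ⟨π₀, hπ₀, hd⟩ := dual_feasible A b w x₀ hx₀ hfeas C hbound
  obtain ⟨x, π, hx, hπ, hAx, hAtπ, hobj⟩ := strong_duality A b w x₀ hx₀ hfeas π₀ hπ₀ hd
  have heq : w ⬝ᵥ x = b ⬝ᵥ π :=
    le_antisymm (weak_duality A b w x π hx hπ hAx hAtπ) hobj
  set s1 := ∑ i, x i * ((Aᵀ *ᵥ π) i - w i) with hs1
  set s2 := ∑ k, π k * (b k - (A *ᵥ x) k) with hs2
  have h1nn : ∀ i ∈ Finset.univ, 0 ≤ x i * ((Aᵀ *ᵥ π) i - w i) := fun i _ =>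
    mul_nonneg (hx i) (by linarith [hAtπ i])
  have h2nn : ∀ k ∈ Finset.univ, 0 ≤ π k * (b k - (A *ᵥ x) k) := fun k _ =>
    mul_nonneg (hπ k) (by linarith [hAx k])
  have hsum : s1 + s2 = 0 := by
    have e1 : s1 = x ⬝ᵥ (Aᵀ *ᵥ π) - x ⬝ᵥ w := by
      rw [hs1]; simp only [mul_sub]; rw [Finset.sum_sub_distrib]; rfl
    have e2 : s2 = π ⬝ᵥ b - π ⬝ᵥ (A *ᵥ x) := by
      rw [hs2]; simp only [mul_sub]; rw [Finset.sum_sub_distrib]; rfl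
    have e3 : x ⬝ᵥ (Aᵀ *ᵥ π) = π ⬝ᵥ (A *ᵥ x) := by
      rw [dotProduct_comm x (Aᵀ *ᵥ π)]
      exact transpose_dot A π x
    have e4 : x ⬝ᵥ w = w ⬝ᵥ x := dotProduct_comm _ _
    have e5 : π ⬝ᵥ b = b ⬝ᵥ π := dotProduct_comm _ _
    rw [e1, e2, e3, e4, e5, heq]; ring
  have hs1nn : 0 ≤ s1 := Finset.sum_nonneg h1nn
  have hs2nn : 0 ≤ s2 := Finset.sum_nonneg h2nn
  have hs1z : s1 = 0 := by linarith
  have hs2z : s2 = 0 := by linarith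
  refine ⟨x, π, hx, hπ, hAx, hAtπ, ?_, ?_⟩
  · intro i
    exact (Finset.sum_eq_zero_iff_of_nonneg h1nn).1 hs1z i (Finset.mem_univ i)
  · intro k
    exact (Finset.sum_eq_zero_iff_of_nonneg h2nn).1 hs2z k (Finset.mem_univ k)

lemma main_aux {mR mZ nR nZ nU nL : ℕ}
    (A_R : Matrix (Fin nU) (Fin mR) ℝ) (A_Z : Matrix (Fin nU) (Fin mZ) ℝ)
    (B_R : Matrix (Fin nU) (Fin nR) ℝ) (B_Z : Matrix (Fin nU) (Fin nZ) ℝ)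
    (Q_R : Matrix (Fin nL) (Fin mR) ℝ) (Q_Z : Matrix (Fin nL) (Fin mZ) ℝ)
    (P_R : Matrix (Fin nL) (Fin nR) ℝ) (P_Z : Matrix (Fin nL) (Fin nZ) ℝ)
    (w_R : Fin nR → ℝ) (w_Z : Fin nZ → ℝ) (r : Fin nU → ℝ) (s : Fin nL → ℝ)
    (p : (Fin mR → ℝ) × (Fin mZ → ℤ) × (Fin nR → ℝ) × (Fin nZ → ℤ))
    (hp : p ∈ IRset A_R A_Z B_R B_Z Q_R Q_Z P_R P_Z w_R w_Z r s)
    (y : Fin nZ → ℤ) (hy : 0 ≤ y)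
    (hproj : ProjMem Q_R Q_Z P_R P_Z s p.1 p.2.1 y) :
    ∃ (x : Fin nR → ℝ) (π : Fin nL → ℝ),
      KKTcond Q_R Q_Z P_R P_Z w_R s p.1 p.2.1 y x π ∧
      w_R ⬝ᵥ x + w_Z ⬝ᵥ cRv y ≤ w_R ⬝ᵥ p.2.2.1 + w_Z ⬝ᵥ cRv p.2.2.2 := by
  obtain ⟨hΩ, hlf, hopt⟩ := hp
  obtain ⟨hxu, hyu, hy', x₁, hx₁0, hx₁⟩ := hproj
  set b : Fin nL → ℝ := s - Q_R *ᵥ p.1 - Q_Z *ᵥ cRv p.2.1 - P_Z *ᵥ cRv y with hb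
  have hx₁feas : P_R *ᵥ x₁ ≤ b := by
    intro k
    have := hx₁ k
    simp only [Pi.add_apply, Pi.sub_apply] at this ⊢
    simp only [hb, Pi.sub_apply]
    linarith
  have hbound : ∀ x : Fin nR → ℝ, 0 ≤ x → P_R *ᵥ x ≤ b →
      w_R ⬝ᵥ x ≤ w_R ⬝ᵥ p.2.2.1 + w_Z ⬝ᵥ cRv p.2.2.2 - w_Z ⬝ᵥ cRv y := by
    intro x hx0 hxb
    have hmem : (x, y) ∈ LowerFeas Q_R Q_Z P_R P_Z s p.1 p.2.1 := by
      refine ⟨hx0, hy, ?_⟩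
      intro k
      have := hxb k
      simp only [hb, Pi.sub_apply] at this
      simp only [Pi.add_apply, Pi.sub_apply]
      linarith
    have := hopt (x, y) hmem
    simp only at this
    linarith
  obtain ⟨x, π, hx0, hπ0, hfeas', hdual', hcs1, hcs2⟩ :=
    exists_kkt P_R b w_R x₁ hx₁0 hx₁feas _ hbound
  refine ⟨x, π, ⟨hx0, hπ0, hfeas', hdual', hcs1, hcs2⟩, ?_⟩
  have hmem : (x, y) ∈ LowerFeas Q_R Q_Z P_R P_Z s p.1 p.2.1 := by
    refine ⟨hx0, hy, ?_⟩
    intro k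
    have := hfeas' k
    simp only [hb, Pi.sub_apply] at this
    simp only [Pi.add_apply, Pi.sub_apply]
    linarith
  have := hopt (x, y) hmem
  simpa using this

end AuxLP
/-- every point of the inducible region satisfies the guarded KKT
constraints for every admissible lower-level integer vector; hence if IR is
nonempty, the master feasible set F(Y') is nonempty for every set Y' of
nonnegative lower-level integer vectors. -/
theorem stmt_3
    (mR mZ nR nZ nU nL : ℕ)
    (A_R : Matrix (Fin nU) (Fin mR) ℝ) (A_Z : Matrix (Fin nU) (Fin mZ) ℝ)
    (B_R : Matrix (Fin nU) (Fin nR) ℝ) (B_Z : Matrix (Fin nU) (Fin nZ) ℝ)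
    (Q_R : Matrix (Fin nL) (Fin mR) ℝ) (Q_Z : Matrix (Fin nL) (Fin mZ) ℝ)
    (P_R : Matrix (Fin nL) (Fin nR) ℝ) (P_Z : Matrix (Fin nL) (Fin nZ) ℝ)
    (w_R : Fin nR → ℝ) (w_Z : Fin nZ → ℝ) (r : Fin nU → ℝ) (s : Fin nL → ℝ) :
    (∀ p ∈ IRset A_R A_Z B_R B_Z Q_R Q_Z P_R P_Z w_R w_Z r s,
      ∀ y : Fin nZ → ℤ, 0 ≤ y → ProjMem Q_R Q_Z P_R P_Z s p.1 p.2.1 y →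
        ∃ (x : Fin nR → ℝ) (π : Fin nL → ℝ),
          KKTcond Q_R Q_Z P_R P_Z w_R s p.1 p.2.1 y x π ∧
          w_R ⬝ᵥ x + w_Z ⬝ᵥ cRv y ≤ w_R ⬝ᵥ p.2.2.1 + w_Z ⬝ᵥ cRv p.2.2.2) ∧
    ((IRset A_R A_Z B_R B_Z Q_R Q_Z P_R P_Z w_R w_Z r s).Nonempty →
      ∀ Y' : Set (Fin nZ → ℤ), (∀ y ∈ Y', 0 ≤ y) →
        (MasterFeas A_R A_Z B_R B_Z Q_R Q_Z P_R P_Z w_R w_Z r s Y').Nonempty) := by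
  constructor
  · intro p hp y hy hproj
    exact main_aux A_R A_Z B_R B_Z Q_R Q_Z P_R P_Z w_R w_Z r s p hp y hy hproj
  · rintro ⟨p, hp⟩ Y' hY'
    exact ⟨p, hp.1, fun y hyY hproj =>
      main_aux A_R A_Z B_R B_Z Q_R Q_Z P_R P_Z w_R w_Z r s p hp y (hY' y hyY) hproj⟩
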